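/- Let V be 4-dimensional over Z/2 with non-degenerate quadratic form g of Arf invariant 0, and let V₁, V₂ be the two distinguished sets as above. Every T ∈ O(V,g) either maps each of V₁, V₂ into itself, or maps V₁ into V₂ and V₂ into V₁. -/
import Mathlib

section Aux

variable {V' : Type*} [AddCommGroup V'] [Module (ZMod 2) V']

/-- The polar form of the total quadratic form on `V' × V'`. -/
def auxBf (g' : V' → ZMod 2) (p q : V' × V') : ZMod 2 :=
  g' (p.1 + q.1) + g' (p.2 + q.2) + g' p.1 + g' p.2 + g' q.1 + g' q.2

lemma aux_add_self (y : V') : y + y = 0 := by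
  rw [← two_smul (ZMod 2) y, show (2 : ZMod 2) = 0 from rfl, zero_smul]

lemma auxBf_T (g' : V' → ZMod 2) (T : (V' × V') →ₗ[ZMod 2] (V' × V'))
    (hTg : ∀ p : V' × V', g' (T p).1 + g' (T p).2 = g' p.1 + g' p.2)
    (p q : V' × V') : auxBf g' (T p) (T q) = auxBf g' p q := by
  have h1 : (T p).1 + (T q).1 = (T (p + q)).1 := by rw [map_add]; rfl
  have h2 : (T p).2 + (T q).2 = (T (p + q)).2 := by rw [map_add]; rfl
  simp only [auxBf, h1, h2]
  have e1 := hTg (p + q)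
  have e2 := hTg p
  have e3 := hTg q
  have e4 : (p + q).1 = p.1 + q.1 := rfl
  have e5 : (p + q).2 = p.2 + q.2 := rfl
  rw [e4, e5] at e1
  linear_combination e1 + e2 + e3

lemma aux_classify (g' : V' → ZMod 2) (hg'0 : g' 0 = 0) (hg'1 : ∀ x : V', x ≠ 0 → g' x = 1)
    (p : V' × V') (h : g' p.1 + g' p.2 = 1) :
    (p.1 ≠ 0 ∧ p.2 = 0) ∨ (p.1 = 0 ∧ p.2 ≠ 0) := by
  by_cases h1 : p.1 = 0 <;> by_cases h2 : p.2 = 0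
  · rw [h1, h2, hg'0] at h
    exact absurd h (by decide)
  · exact Or.inr ⟨h1, h2⟩
  · exact Or.inl ⟨h1, h2⟩
  · rw [hg'1 _ h1, hg'1 _ h2] at h
    exact absurd h (by decide)

lemma aux_key (g' : V' → ZMod 2) (hg'0 : g' 0 = 0) (hg'1 : ∀ x : V', x ≠ 0 → g' x = 1)
    (p q : V' × V') (hp : g' p.1 + g' p.2 = 1) (hq : g' q.1 + g' q.2 = 1)
    (hpq : p ≠ q) : auxBf g' p q = 1 + g' p.1 + g' q.1 := by
  rcases aux_classify g' hg'0 hg'1 p hp with ⟨h1, h2⟩ | ⟨h1, h2⟩ <;>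
    rcases aux_classify g' hg'0 hg'1 q hq with ⟨k1, k2⟩ | ⟨k1, k2⟩
  · have hne : p.1 + q.1 ≠ 0 := by
      intro h
      apply hpq
      have : p.1 = q.1 := by
        have := congrArg (· + q.1) h
        simpa [add_assoc, aux_add_self] using this
      exact Prod.ext this (h2.trans k2.symm)
    simp only [auxBf, h2, k2, add_zero, hg'0, hg'1 _ h1, hg'1 _ k1, hg'1 _ hne]
    try decide
  · simp only [auxBf, h2, k1, add_zero, zero_add, hg'0, hg'1 _ h1, hg'1 _ k2]
    try decide
  · simp only [auxBf, h1, k2, add_zero, zero_add, hg'0, hg'1 _ h2, hg'1 _ k1]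
    try decide
  · have hne : p.2 + q.2 ≠ 0 := by
      intro h
      apply hpq
      have : p.2 = q.2 := by
        have := congrArg (· + q.2) h
        simpa [add_assoc, aux_add_self] using this
      exact Prod.ext (h1.trans k1.symm) this
    simp only [auxBf, h1, k1, add_zero, zero_add, hg'0, hg'1 _ h2, hg'1 _ k2, hg'1 _ hne]
    try decide

end Aux

theorem stmt15 {V' : Type*} [AddCommGroup V'] [Module (ZMod 2) V']
    [FiniteDimensional (ZMod 2) V']
    (hdim : Module.finrank (ZMod 2) V' = 2)
    (g' : V' → ZMod 2) (hg'0 : g' 0 = 0) (hg'1 : ∀ x : V', x ≠ 0 → g' x = 1)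
    (B' : LinearMap.BilinForm (ZMod 2) V')
    (hquad : ∀ x y, g' (x + y) = g' x + g' y + B' x y)
    (T : (V' × V') →ₗ[ZMod 2] (V' × V')) (hTb : Function.Bijective T)
    (hTg : ∀ p : V' × V', g' (T p).1 + g' (T p).2 = g' p.1 + g' p.2) :
    ((∀ p : V' × V', p.1 ≠ 0 ∧ p.2 = 0 → (T p).1 ≠ 0 ∧ (T p).2 = 0) ∧
     (∀ p : V' × V', p.1 = 0 ∧ p.2 ≠ 0 → (T p).1 = 0 ∧ (T p).2 ≠ 0)) ∨
    ((∀ p : V' × V', p.1 ≠ 0 ∧ p.2 = 0 → (T p).1 = 0 ∧ (T p).2 ≠ 0) ∧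
     (∀ p : V' × V', p.1 = 0 ∧ p.2 ≠ 0 → (T p).1 ≠ 0 ∧ (T p).2 = 0)) := by
  have hZ : ∀ z : ZMod 2, z = 0 ∨ z = 1 := by decide
  -- get a nonzero element of V'
  have hnt : Nontrivial V' := by
    apply Module.nontrivial_of_finrank_pos (R := ZMod 2)
    omega
  obtain ⟨x₀, hx₀⟩ := exists_ne (0 : V')
  set a : V' × V' := (x₀, 0) with ha_def
  have ha1 : g' a.1 = 1 := hg'1 _ hx₀
  have ha : g' a.1 + g' a.2 = 1 := by rw [ha1, show a.2 = (0 : V') from rfl, hg'0]; decide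
  have hTa : g' (T a).1 + g' (T a).2 = 1 := (hTg a).trans ha
  -- main invariance of the "side" function
  have hmain : ∀ p : V' × V', g' p.1 + g' p.2 = 1 →
      g' (T p).1 + g' (T a).1 = g' p.1 + g' a.1 := by
    intro p hp
    by_cases hpa : p = a
    · subst hpa
      rw [aux_add_self, aux_add_self]
    · have hTpa : T p ≠ T a := fun h => hpa (hTb.1 h)
      have hq : g' (T p).1 + g' (T p).2 = 1 := (hTg p).trans hp
      have e1 := aux_key g' hg'0 hg'1 (T p) (T a) hq hTa hTpa
      have e2 := aux_key g' hg'0 hg'1 p a hp ha hpa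
      have e3 := auxBf_T g' T hTg p a
      linear_combination e2 + e3 - e1
  have hval1 : ∀ p : V' × V', p.1 ≠ 0 ∧ p.2 = 0 → g' p.1 + g' p.2 = 1 := by
    intro p ⟨h1, h2⟩
    rw [hg'1 _ h1, h2, hg'0]; decide
  have hval2 : ∀ p : V' × V', p.1 = 0 ∧ p.2 ≠ 0 → g' p.1 + g' p.2 = 1 := by
    intro p ⟨h1, h2⟩
    rw [hg'1 _ h2, h1, hg'0]; decide
  have hside : ∀ p : V' × V', g' p.1 + g' p.2 = 1 → g' (T p).1 = 1 →
      (T p).1 ≠ 0 ∧ (T p).2 = 0 := by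
    intro p hp hs
    rcases aux_classify g' hg'0 hg'1 (T p) ((hTg p).trans hp) with h | ⟨h1, _⟩
    · exact h
    · rw [h1, hg'0] at hs; exact absurd hs (by decide)
  have hside' : ∀ p : V' × V', g' p.1 + g' p.2 = 1 → g' (T p).1 = 0 →
      (T p).1 = 0 ∧ (T p).2 ≠ 0 := by
    intro p hp hs
    rcases aux_classify g' hg'0 hg'1 (T p) ((hTg p).trans hp) with ⟨h1, _⟩ | h
    · rw [hg'1 _ h1] at hs; exact absurd hs (by decide)
    · exact h
  by_cases hc : g' (T a).1 = 1
  · left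
    constructor
    · intro p hp
      have hpv := hval1 p hp
      have heq := hmain p hpv
      rw [hc, ha1, hg'1 _ hp.1] at heq
      rcases hZ (g' (T p).1) with h | h
      · rw [h] at heq; exact absurd heq (by decide)
      · exact hside p hpv h
    · intro p hp
      have hpv := hval2 p hp
      have heq := hmain p hpv
      rw [hc, ha1, hp.1, hg'0] at heq
      rcases hZ (g' (T p).1) with h | h
      · exact hside' p hpv h
      · rw [h] at heq; exact absurd heq (by decide)
  · have hc0 : g' (T a).1 = 0 := by
      rcases aux_classify g' hg'0 hg'1 (T a) hTa with ⟨h1, _⟩ | ⟨h1, _⟩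
      · exact absurd (hg'1 _ h1) hc
      · rw [h1, hg'0]
    right
    constructor
    · intro p hp
      have hpv := hval1 p hp
      have heq := hmain p hpv
      rw [hc0, ha1, hg'1 _ hp.1] at heq
      rcases hZ (g' (T p).1) with h | h
      · exact hside' p hpv h
      · rw [h] at heq; exact absurd heq (by decide)
    · intro p hp
      have hpv := hval2 p hp
      have heq := hmain p hpv
      rw [hc0, ha1, hp.1, hg'0] at heq
      rcases hZ (g' (T p).1) with h | h
      · rw [h] at heq; exact absurd heq (by decide)
      · exact hside p hpv h
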